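/- arXiv:2412.08334 — 6 statements merged into one kernel-verified Lean document; each statement's English description precedes it below -/
import Mathlib

section
/- Let (X_n) be an i.i.d. sequence of integrable real random variables with E[X_1] > 0, and let S_0 = 0, S_{n+1} = S_n + X_{n+1}. Then with positive probability S_n ≥ 0 for all n, i.e., the infimum of the walk is attained at S_0 = 0 with positive probability. -/
open MeasureTheory ProbabilityTheory Filter Finset

section Aux

variable {Ω : Type*} [MeasureSpace Ω] [IsProbabilityMeasure (ℙ : Measure Ω)]
    (X : ℕ → Ω → ℝ)

/-- The law of a tuple of distinct coordinates of an i.i.d. sequence is the product measure. -/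
lemma aux_tuple_law (hmeas : ∀ n, Measurable (X n))
    (hindep : iIndepFun X ℙ)
    (hident : ∀ n, IdentDistrib (X n) (X 0) ℙ ℙ)
    {N : ℕ} (f : Fin N → ℕ) (hf : Function.Injective f) :
    Measure.map (fun ω (i : Fin N) => X (f i) ω) ℙ
      = Measure.pi (fun _ => Measure.map (X 0) ℙ) := by
  refine (Measure.pi_eq fun s hs => ?_).symm
  have hY : Measurable (fun ω (i : Fin N) => X (f i) ω) :=
    measurable_pi_lambda _ fun i => hmeas _
  rw [Measure.map_apply hY (MeasurableSet.univ_pi hs)]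
  have hpre : (fun ω (i : Fin N) => X (f i) ω) ⁻¹' (Set.pi Set.univ s)
      = ⋂ i : Fin N, X (f i) ⁻¹' s i := by
    ext ω; simp [Set.mem_pi]
  rw [hpre]
  -- sets indexed by naturals, using an inverse of `f`
  classical
  set g : ℕ → Set ℝ := fun k =>
    if h : ∃ i : Fin N, f i = k then s h.choose else Set.univ with hg
  have hgmeas : ∀ k, MeasurableSet (g k) := by
    intro k
    by_cases h : ∃ i : Fin N, f i = k
    · simp only [hg, dif_pos h]; exact hs _
    · simp only [hg, dif_neg h]; exact MeasurableSet.univ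
  have hgf : ∀ i : Fin N, g (f i) = s i := by
    intro i
    have h : ∃ j : Fin N, f j = f i := ⟨i, rfl⟩
    have : h.choose = i := hf h.choose_spec
    simp [hg, dif_pos h, this]
  set S : Finset ℕ := Finset.image f Finset.univ with hS
  have hiInter : (⋂ i : Fin N, X (f i) ⁻¹' s i) = ⋂ k ∈ S, X k ⁻¹' g k := by
    ext ω
    simp only [Set.mem_iInter, hS, Finset.mem_image, Finset.mem_univ, true_and]
    constructor
    · rintro h k ⟨i, rfl⟩
      rw [hgf]; exact h i
    · intro h i
      have := h (f i) ⟨i, rfl⟩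
      rwa [hgf] at this
  rw [hiInter]
  rw [hindep.meas_biInter (S := S) (s := fun k => X k ⁻¹' g k)
    (fun k _ => ⟨g k, hgmeas k, rfl⟩)]
  rw [hS, Finset.prod_image (fun a _ b _ hab => hf hab)]
  refine Finset.prod_congr rfl fun i _ => ?_
  rw [hgf]
  rw [(hident (f i)).measure_mem_eq (hs i),
    Measure.map_apply (hmeas 0) (hs i)]

/-- The finitely-truncated "stays nonnegative" event has the same probability for the
shifted walk as for the original walk. -/
lemma aux_shift_eq (hmeas : ∀ n, Measurable (X n))
    (hindep : iIndepFun X ℙ)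
    (hident : ∀ n, IdentDistrib (X n) (X 0) ℙ ℙ) (n N : ℕ) :
    ℙ {ω | ∀ m ≤ N, 0 ≤ ∑ i ∈ Finset.range m, X (n + i) ω}
      = ℙ {ω | ∀ m ≤ N, 0 ≤ ∑ i ∈ Finset.range m, X i ω} := by
  classical
  set G : (Fin N → ℝ) → ℕ → ℝ := fun x i => if h : i < N then x ⟨i, h⟩ else 0 with hG
  set T : Set (Fin N → ℝ) := {x | ∀ m ≤ N, 0 ≤ ∑ i ∈ Finset.range m, G x i} with hT
  have hTmeas : MeasurableSet T := by
    have : T = ⋂ m, ⋂ (_ : m ≤ N), {x | 0 ≤ ∑ i ∈ Finset.range m, G x i} := by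
      ext x; simp [hT]
    rw [this]
    refine MeasurableSet.iInter fun m => MeasurableSet.iInter fun _ => ?_
    refine measurableSet_le measurable_const (Finset.measurable_sum _ fun i _ => ?_)
    by_cases h : i < N
    · simp only [hG, dif_pos h]; exact measurable_pi_apply _
    · simp only [hG, dif_neg h]; exact measurable_const
  have key : ∀ k : ℕ,
      (fun ω (i : Fin N) => X (k + i) ω) ⁻¹' T
        = {ω | ∀ m ≤ N, 0 ≤ ∑ i ∈ Finset.range m, X (k + i) ω} := by
    intro k
    ext ω
    simp only [Set.mem_preimage, hT, Set.mem_setOf_eq]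
    constructor
    · intro h m hm
      have := h m hm
      refine le_trans this (le_of_eq ?_)
      refine Finset.sum_congr rfl fun i hi => ?_
      have hiN : i < N := lt_of_lt_of_le (Finset.mem_range.1 hi) hm
      simp [hG, dif_pos hiN]
    · intro h m hm
      refine le_trans (h m hm) (le_of_eq ?_)
      refine Finset.sum_congr rfl fun i hi => ?_
      have hiN : i < N := lt_of_lt_of_le (Finset.mem_range.1 hi) hm
      simp [hG, dif_pos hiN]
  have hinj : ∀ k : ℕ, Function.Injective (fun i : Fin N => k + (i : ℕ)) := by
    intro k i j hij
    exact Fin.ext (Nat.add_left_cancel hij)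
  have hid : IdentDistrib (fun ω (i : Fin N) => X (n + i) ω)
      (fun ω (i : Fin N) => X (0 + i) ω) ℙ ℙ := by
    refine ⟨(measurable_pi_lambda _ fun i => hmeas _).aemeasurable,
      (measurable_pi_lambda _ fun i => hmeas _).aemeasurable, ?_⟩
    rw [aux_tuple_law X hmeas hindep hident _ (hinj n),
      aux_tuple_law X hmeas hindep hident _ (hinj 0)]
  have := hid.measure_mem_eq hTmeas
  rw [key n, key 0] at this
  rw [this]
  congr 1
  ext ω
  simp

end Aux

/-- A random walk on ℝ with i.i.d. integrable increments of strictly positive mean,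
started at 0, stays nonnegative forever with positive probability. -/
theorem stmt_0 {Ω : Type*} [MeasureSpace Ω] [IsProbabilityMeasure (ℙ : Measure Ω)]
    (X : ℕ → Ω → ℝ) (hmeas : ∀ n, Measurable (X n))
    (hindep : iIndepFun X ℙ)
    (hident : ∀ n, IdentDistrib (X n) (X 0) ℙ ℙ)
    (hint : Integrable (X 0) ℙ)
    (hpos : 0 < ∫ ω, X 0 ω ∂ℙ) :
    0 < ℙ {ω | ∀ n : ℕ, 0 ≤ ∑ i ∈ Finset.range n, X i ω} := by
  classical
  set S : ℕ → Ω → ℝ := fun n ω => ∑ i ∈ Finset.range n, X i ω with hSdef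
  by_contra hcon
  push_neg at hcon
  have hA0 : ℙ {ω | ∀ n : ℕ, 0 ≤ S n ω} = 0 := le_antisymm hcon zero_le
  -- truncated events for the original walk
  set E : ℕ → Set Ω := fun N => {ω | ∀ m ≤ N, 0 ≤ S m ω} with hE
  have hEmeas : ∀ N, MeasurableSet (E N) := by
    intro N
    have : E N = ⋂ m, ⋂ (_ : m ≤ N), {ω | 0 ≤ S m ω} := by ext ω; simp [hE]
    rw [this]
    refine MeasurableSet.iInter fun m => MeasurableSet.iInter fun _ => ?_
    exact measurableSet_le measurable_const (Finset.measurable_sum _ fun i _ => hmeas i)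
  have hEanti : Antitone E := by
    intro a b hab ω hω m hm
    exact hω m (le_trans hm hab)
  have hEinter : (⋂ N, E N) = {ω | ∀ n : ℕ, 0 ≤ S n ω} := by
    ext ω
    simp only [Set.mem_iInter, hE, Set.mem_setOf_eq]
    exact ⟨fun h n => h n n le_rfl, fun h N m _ => h m⟩
  have hEinf : ⨅ N, ℙ (E N) = 0 := by
    rw [← hEanti.measure_iInter (fun N => (hEmeas N).nullMeasurableSet)
      ⟨0, measure_ne_top _ _⟩, hEinter, hA0]
  -- the "first minimum at n" events
  set B : ℕ → Set Ω := fun n =>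
    {ω | (∀ k < n, S n ω < S k ω) ∧ ∀ m, S n ω ≤ S m ω} with hB
  -- each B n is null
  have hBnull : ∀ n, ℙ (B n) = 0 := by
    intro n
    have hsub : B n ⊆ ⋂ N, {ω | ∀ m ≤ N, 0 ≤ ∑ i ∈ Finset.range m, X (n + i) ω} := by
      intro ω hω
      simp only [Set.mem_iInter, Set.mem_setOf_eq]
      intro N m _
      have h1 : S n ω ≤ S (n + m) ω := hω.2 (n + m)
      have h2 : S (n + m) ω = S n ω + ∑ i ∈ Finset.range m, X (n + i) ω := by
        simp only [hSdef]
        rw [Finset.sum_range_add]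
      linarith
    have hle : ℙ (B n) ≤ ⨅ N, ℙ (E N) := by
      refine le_iInf fun N => ?_
      calc ℙ (B n) ≤ ℙ {ω | ∀ m ≤ N, 0 ≤ ∑ i ∈ Finset.range m, X (n + i) ω} :=
            measure_mono (hsub.trans (Set.iInter_subset _ N))
        _ = ℙ (E N) := aux_shift_eq X hmeas hindep hident n N
    rw [hEinf] at hle
    exact le_antisymm hle zero_le
  -- almost surely the walk attains its minimum (strong law)
  have hslln := strong_law_ae_real X hint
    (fun i j hij => hindep.indepFun hij) hident
  have hcover : ∀ᵐ ω ∂ℙ, ω ∈ ⋃ n, B n := by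
    filter_upwards [hslln] with ω hω
    -- the walk tends to infinity
    have htop : Tendsto (fun n => S n ω) atTop atTop := by
      set c : ℝ := (∫ ω, X 0 ω ∂ℙ) / 2 with hc
      have hcpos : 0 < c := half_pos hpos
      have hev : ∀ᶠ n : ℕ in atTop, c < S n ω / n :=
        hω.eventually_const_lt (by simp only [hc]; linarith)
      refine tendsto_atTop_mono' _ ?_
        (Tendsto.atTop_mul_const hcpos tendsto_natCast_atTop_atTop)
      filter_upwards [hev, eventually_gt_atTop 0] with n hn hn0
      have hnpos : (0 : ℝ) < n := by exact_mod_cast hn0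
      have := (lt_div_iff₀ hnpos).1 hn
      linarith [this]
    -- find a global minimum
    have hglobal : ∃ n, ∀ m, S n ω ≤ S m ω := by
      obtain ⟨N, hN⟩ := eventually_atTop.1 (htop.eventually_ge_atTop 0)
      obtain ⟨n, hn, hmin⟩ := Finset.exists_min_image (Finset.range (N + 1))
        (fun m => S m ω) ⟨0, Finset.mem_range.2 (Nat.succ_pos N)⟩
      refine ⟨n, fun m => ?_⟩
      by_cases hm : m ≤ N
      · exact hmin m (Finset.mem_range.2 (Nat.lt_succ_of_le hm))
      · have h0 : S n ω ≤ S 0 ω := hmin 0 (Finset.mem_range.2 (Nat.succ_pos N))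
        have hS0 : S 0 ω = 0 := by simp [hSdef]
        have : (0:ℝ) ≤ S m ω := hN m (le_of_not_ge hm)
        linarith
    -- take the first global minimum
    set n₀ := Nat.find hglobal with hn₀
    refine Set.mem_iUnion.2 ⟨n₀, ?_, Nat.find_spec hglobal⟩
    intro k hk
    have hnk := Nat.find_min hglobal hk
    push_neg at hnk
    obtain ⟨m, hm⟩ := hnk
    exact lt_of_le_of_lt ((Nat.find_spec hglobal) m) hm
  -- conclude
  have hUnull : ℙ (⋃ n, B n) = 0 := measure_iUnion_null hBnull
  have hCnull : ℙ ((⋃ n, B n)ᶜ) = 0 := by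
    rw [ae_iff] at hcover
    exact hcover
  have : (1 : ENNReal) ≤ 0 := by
    calc (1 : ENNReal) = ℙ (Set.univ : Set Ω) := (measure_univ).symm
      _ ≤ ℙ (⋃ n, B n) + ℙ ((⋃ n, B n)ᶜ) := by
          rw [← Set.union_compl_self (⋃ n, B n)]
          exact measure_union_le _ _
      _ = 0 := by rw [hUnull, hCnull, add_zero]
  simp at this
end

section
/- Let g be the probability generating function of a probability distribution (p_k) on ℕ with p_0 = 0, p_1 > 0 and mean μ = g'(1) > 2. Then the equation g(x) = x^2 has exactly one solution in the open interval (0,1). -/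
set_option maxHeartbeats 1000000


/-- If `g` is the pgf of a pmf `(p_k)` on ℕ with `p 0 = 0`, `p 1 > 0` and mean `> 2`,
then `g x = x ^ 2` has exactly one solution in `(0, 1)`. -/
theorem stmt_1 (p : ℕ → ℝ) (hnn : ∀ k, 0 ≤ p k) (hsum : ∑' k, p k = 1)
    (hp0 : p 0 = 0) (hp1 : 0 < p 1)
    (hmean_summable : Summable (fun k : ℕ => (k : ℝ) * p k))
    (hmean : 2 < ∑' k : ℕ, (k : ℝ) * p k) :
    ∃! x : ℝ, x ∈ Set.Ioo (0 : ℝ) 1 ∧ (∑' k, p k * x ^ k) = x ^ 2 := by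
  have hpsum : Summable p := by
    by_contra h
    rw [tsum_eq_zero_of_not_summable h] at hsum
    norm_num at hsum
  set q : ℕ → ℝ := fun k => p (k + 1) with hq
  have hqnn : ∀ k, 0 ≤ q k := fun k => hnn _
  have hqsum : Summable q := (summable_nat_add_iff 1).2 hpsum
  have hqsum1 : (∑' k, q k) = 1 := by
    have h := Summable.tsum_eq_zero_add hpsum
    rw [hp0, zero_add] at h
    rw [← h, hsum]
  -- summability of the shifted series on [0,1]
  have hsx : ∀ x : ℝ, 0 ≤ x → x ≤ 1 → Summable (fun k => q k * x ^ k) := by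
    intro x hx0 hx1
    refine Summable.of_nonneg_of_le (fun k => mul_nonneg (hqnn k) (pow_nonneg hx0 k))
      (fun k => ?_) hqsum
    have : x ^ k ≤ 1 := pow_le_one₀ hx0 hx1
    nlinarith [hqnn k]
  set f : ℝ → ℝ := fun x => ∑' k, q k * x ^ k with hf
  -- continuity of f on [0,1]
  have hfc : ContinuousOn f (Set.Icc (0:ℝ) 1) := by
    apply continuousOn_tsum (u := q)
      (fun k => (continuous_const.mul (continuous_pow k)).continuousOn) hqsum
    intro k x hx
    obtain ⟨hx0, hx1⟩ := hx
    have h1 : x ^ k ≤ 1 := pow_le_one₀ hx0 hx1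
    have h2 : 0 ≤ x ^ k := pow_nonneg hx0 k
    show ‖q k * x ^ k‖ ≤ q k
    rw [Real.norm_eq_abs, abs_of_nonneg (mul_nonneg (hqnn k) h2)]
    nlinarith [hqnn k]
  have hf1 : f 1 = 1 := by
    simp only [hf, one_pow, mul_one, hqsum1]
  have hf0 : f 0 = p 1 := by
    have : f 0 = ∑' k : ℕ, q k * (0:ℝ) ^ k := rfl
    rw [this, tsum_eq_single 0 (by intro k hk; simp [zero_pow hk])]
    simp [hq]
  -- relation between original equation and fixed points of f
  have key : ∀ x : ℝ, x ∈ Set.Ioo (0:ℝ) 1 →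
      ((∑' k, p k * x ^ k) = x ^ 2 ↔ f x = x) := by
    intro x hx
    have hx0 : (0:ℝ) < x := hx.1
    have hsp : Summable (fun k => p k * x ^ k) := by
      refine Summable.of_nonneg_of_le (fun k => mul_nonneg (hnn k) (pow_nonneg hx0.le k))
        (fun k => ?_) hpsum
      have : x ^ k ≤ 1 := pow_le_one₀ hx0.le hx.2.le
      nlinarith [hnn k]
    have hshift : (∑' k, p k * x ^ k) = x * f x := by
      rw [Summable.tsum_eq_zero_add hsp, hp0]
      simp only [zero_mul, zero_add, hf]
      rw [← tsum_mul_left]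
      congr 1 with k
      ring
    rw [hshift]
    constructor
    · intro h
      have : x * f x = x * x := by rw [h]; ring
      exact mul_left_cancel₀ (ne_of_gt hx0) this
    · intro h
      rw [h]; ring
  -- there is an index m ≥ 3 with p m > 0
  have hm : ∃ m, 3 ≤ m ∧ 0 < p m := by
    by_contra h
    push_neg at h
    have hle : ∀ k : ℕ, (k:ℝ) * p k ≤ 2 * p k := by
      intro k
      rcases k with _ | _ | _ | n
      · simp [hp0]
      · push_cast; nlinarith [hnn 1]
      · norm_num
      · have h0 : p (n+3) ≤ 0 := h (n+3) (by omega)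
        have hp : p (n+3) = 0 := le_antisymm h0 (hnn (n+3))
        simp [hp]
    have : (∑' k : ℕ, (k:ℝ) * p k) ≤ ∑' k : ℕ, 2 * p k :=
      Summable.tsum_le_tsum hle hmean_summable (hpsum.mul_left 2)
    rw [tsum_mul_left, hsum] at this
    linarith
  obtain ⟨m, hm3, hmpos⟩ := hm
  set j := m - 1 with hjdef
  have hj2 : 2 ≤ j := by omega
  have hqj : 0 < q j := by
    have : j + 1 = m := by omega
    simp only [hq, this]; exact hmpos
  -- strict convexity of f on [0,1]
  have hconv : StrictConvexOn ℝ (Set.Icc (0:ℝ) 1) f := by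
    refine ⟨convex_Icc 0 1, ?_⟩
    intro x hx y hy hxy a b ha hb hab
    simp only [smul_eq_mul]
    have hx0 : (0:ℝ) ≤ x := hx.1
    have hy0 : (0:ℝ) ≤ y := hy.1
    have hz0 : (0:ℝ) ≤ a * x + b * y := by positivity
    have hz1 : a * x + b * y ≤ 1 := by nlinarith [hx.2, hy.2]
    have hterm : ∀ k, q k * (a * x + b * y) ^ k ≤
        a * (q k * x ^ k) + b * (q k * y ^ k) := by
      intro k
      have := (convexOn_pow (𝕜 := ℝ) k).2 (Set.mem_Ici.2 hx0) (Set.mem_Ici.2 hy0)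
        ha.le hb.le hab
      simp only [smul_eq_mul] at this
      nlinarith [hqnn k]
    have hstrict : q j * (a * x + b * y) ^ j <
        a * (q j * x ^ j) + b * (q j * y ^ j) := by
      have := (strictConvexOn_pow hj2).2 (Set.mem_Ici.2 hx0) (Set.mem_Ici.2 hy0)
        hxy ha hb hab
      simp only [smul_eq_mul] at this
      nlinarith [hqj]
    have hsumr : Summable (fun k => a * (q k * x ^ k) + b * (q k * y ^ k)) :=
      ((hsx x hx0 hx.2).mul_left a).add ((hsx y hy0 hy.2).mul_left b)
    have hlt := Summable.tsum_lt_tsum_of_nonneg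
      (fun k => mul_nonneg (hqnn k) (pow_nonneg hz0 k)) hterm hstrict hsumr
    calc f (a * x + b * y) = ∑' k, q k * (a * x + b * y) ^ k := rfl
      _ < ∑' k, (a * (q k * x ^ k) + b * (q k * y ^ k)) := hlt
      _ = a * f x + b * f y := by
          rw [Summable.tsum_add ((hsx x hx0 hx.2).mul_left a) ((hsx y hy0 hy.2).mul_left b),
            tsum_mul_left, tsum_mul_left]
  -- mean of q is > 1
  have hkq_sum : Summable (fun k : ℕ => ((k:ℝ) + 1) * q k) := by
    have := (summable_nat_add_iff (f := fun k : ℕ => (k : ℝ) * p k) 1).2 hmean_summable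
    simpa [hq] using this
  have hkq : Summable (fun k : ℕ => (k:ℝ) * q k) := by
    have := hkq_sum.sub hqsum
    refine this.congr fun k => ?_
    ring
  have hkq_val : 1 < ∑' k : ℕ, (k:ℝ) * q k := by
    have h1 : (∑' k : ℕ, (k:ℝ) * p k) = ∑' k : ℕ, ((k:ℝ) + 1) * q k := by
      rw [Summable.tsum_eq_zero_add hmean_summable]
      push_cast
      simp [hq]
    have h2 : (∑' k : ℕ, ((k:ℝ) + 1) * q k) = (∑' k : ℕ, (k:ℝ) * q k) + ∑' k : ℕ, q k := by
      rw [← Summable.tsum_add hkq hqsum]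
      congr 1 with k
      ring
    rw [h1, h2, hqsum1] at hmean
    linarith
  -- find x₀ ∈ (0,1) with f x₀ < x₀
  obtain ⟨x₀, hx₀mem, hx₀lt⟩ : ∃ x₀ ∈ Set.Ioo (0:ℝ) 1, f x₀ < x₀ := by
    -- finite truncation
    obtain ⟨N, hN⟩ : ∃ N, 1 < ∑ k ∈ Finset.range N, (k:ℝ) * q k := by
      have htend := hkq.hasSum.tendsto_sum_nat
      have := (htend.eventually (eventually_gt_nhds hkq_val)).exists
      obtain ⟨N, hN⟩ := this
      exact ⟨N, hN⟩
    set φ : ℝ → ℝ := fun x => ∑ k ∈ Finset.range N, q k * ∑ i ∈ Finset.range k, x ^ i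
      with hφdef
    have hφ1 : 1 < φ 1 := by
      have : φ 1 = ∑ k ∈ Finset.range N, (k:ℝ) * q k := by
        apply Finset.sum_congr rfl
        intro k _
        simp [mul_comm]
      rw [this]; exact hN
    have hφc : Continuous φ :=
      continuous_finset_sum _ fun k _ =>
        continuous_const.mul (continuous_finset_sum _ fun i _ => continuous_pow i)
    have hne : (nhdsWithin (1:ℝ) (Set.Ioo (0:ℝ) 1)).NeBot := by
      rw [← mem_closure_iff_nhdsWithin_neBot, closure_Ioo (by norm_num : (0:ℝ) ≠ 1)]
      exact ⟨by norm_num, le_refl 1⟩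
    have htend : Filter.Tendsto φ (nhdsWithin (1:ℝ) (Set.Ioo (0:ℝ) 1)) (nhds (φ 1)) :=
      (hφc.continuousAt).tendsto.mono_left nhdsWithin_le_nhds
    obtain ⟨x₀, hgt, hmem⟩ :=
      ((htend.eventually (eventually_gt_nhds hφ1)).and self_mem_nhdsWithin).exists
    refine ⟨x₀, hmem, ?_⟩
    have hx0 : (0:ℝ) < x₀ := hmem.1
    have hx1 : x₀ < 1 := hmem.2
    have hsq : Summable (fun k => q k * x₀ ^ k) := hsx x₀ hx0.le hx1.le
    have hgeom : ∀ k : ℕ, 1 - x₀ ^ k = (1 - x₀) * ∑ i ∈ Finset.range k, x₀ ^ i := by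
      intro k
      have := geom_sum_mul x₀ k
      nlinarith [this]
    have hdiff : 1 - f x₀ = ∑' k : ℕ, q k * (1 - x₀ ^ k) := by
      have h' : (∑' k : ℕ, q k * (1 - x₀ ^ k)) = (∑' k : ℕ, q k) - ∑' k : ℕ, q k * x₀ ^ k := by
        rw [← Summable.tsum_sub hqsum hsq]
        congr 1 with k
        ring
      rw [h', hqsum1]
    have hsdiff : Summable (fun k => q k * (1 - x₀ ^ k)) := by
      have := hqsum.sub hsq
      refine this.congr fun k => ?_
      ring
    have hge : (∑ k ∈ Finset.range N, q k * (1 - x₀ ^ k)) ≤ ∑' k : ℕ, q k * (1 - x₀ ^ k) := by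
      apply Summable.sum_le_tsum _ _ hsdiff
      intro k _
      have h1 : x₀ ^ k ≤ 1 := pow_le_one₀ hx0.le hx1.le
      nlinarith [hqnn k]
    have heq : (∑ k ∈ Finset.range N, q k * (1 - x₀ ^ k)) = (1 - x₀) * φ x₀ := by
      rw [hφdef, Finset.mul_sum]
      apply Finset.sum_congr rfl
      intro k _
      rw [hgeom k]
      ring
    have : (1 - x₀) < 1 - f x₀ := by
      rw [hdiff]
      calc (1 - x₀) = (1 - x₀) * 1 := by ring
        _ < (1 - x₀) * φ x₀ := by
            apply mul_lt_mul_of_pos_left hgt (by linarith)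
        _ = ∑ k ∈ Finset.range N, q k * (1 - x₀ ^ k) := heq.symm
        _ ≤ ∑' k : ℕ, q k * (1 - x₀ ^ k) := hge
    linarith
  -- existence via IVT on F = f - x
  have hx₀0 : (0:ℝ) < x₀ := hx₀mem.1
  have hx₀1 : x₀ < 1 := hx₀mem.2
  set F : ℝ → ℝ := fun x => f x - x with hF
  have hFc : ContinuousOn F (Set.Icc 0 x₀) := by
    apply ContinuousOn.sub
    · exact hfc.mono (Set.Icc_subset_Icc le_rfl hx₀1.le)
    · exact continuousOn_id
  have hF0 : 0 < F 0 := by simp [hF, hf0, hp1]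
  have hFx₀ : F x₀ < 0 := by simp [hF]; linarith
  obtain ⟨c, hc, hFc0⟩ : ∃ c ∈ Set.Ioo (0:ℝ) x₀, F c = 0 := by
    have h0 : (0:ℝ) ∈ Set.Ioo (F x₀) (F 0) := ⟨hFx₀, hF0⟩
    have := intermediate_value_Ioo' hx₀0.le hFc h0
    obtain ⟨c, hc, hceq⟩ := this
    exact ⟨c, hc, hceq⟩
  have hcmem : c ∈ Set.Ioo (0:ℝ) 1 := ⟨hc.1, lt_trans hc.2 hx₀1⟩
  have hcfix : f c = c := by
    have : f c - c = 0 := hFc0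
    linarith
  -- uniqueness of fixed points
  have huniq : ∀ u v : ℝ, u ∈ Set.Ioo (0:ℝ) 1 → v ∈ Set.Ioo (0:ℝ) 1 →
      f u = u → f v = v → u = v := by
    have main : ∀ u v : ℝ, u ∈ Set.Ioo (0:ℝ) 1 → v ∈ Set.Ioo (0:ℝ) 1 →
        f u = u → f v = v → u < v → False := by
      intro u v hu hv hfu hfv huv
      have hu1 : u < 1 := hu.2
      have hv1 : v < 1 := hv.2
      set θ : ℝ := (1 - v) / (1 - u) with hθ
      have h1u : (0:ℝ) < 1 - u := by linarith
      have hθpos : 0 < θ := div_pos (by linarith) h1u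
      have hθlt : θ < 1 := by
        rw [hθ, div_lt_one h1u]; linarith
      have hcomb : θ * u + (1 - θ) * 1 = v := by
        have h' : θ * (1 - u) = 1 - v := by rw [hθ]; exact div_mul_cancel₀ _ h1u.ne'
        linarith
      have := hconv.2 (Set.mem_Icc.2 ⟨hu.1.le, hu1.le⟩)
        (Set.mem_Icc.2 ⟨by norm_num, le_refl 1⟩) (ne_of_lt hu1) hθpos
        (by linarith : (0:ℝ) < 1 - θ) (by ring)
      simp only [smul_eq_mul] at this
      rw [hcomb, hfu, hf1, hfv] at this
      nlinarith
    intro u v hu hv hfu hfv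
    rcases lt_trichotomy u v with h | h | h
    · exact absurd (main u v hu hv hfu hfv h) (fun hfalse => hfalse.elim)
    · exact h
    · exact absurd (main v u hv hu hfv hfu h) (fun hfalse => hfalse.elim)
  refine ⟨c, ⟨hcmem, (key c hcmem).2 hcfix⟩, ?_⟩
  intro y ⟨hymem, hyeq⟩
  exact huniq y c hymem hcmem ((key y hymem).1 hyeq) hcfix
end

section
/- For the geometric offspring distribution on ℕ with parameter s (p_k = s(1−s)^{k−1} for k ≥ 1) and g(x) = sx/(1−(1−s)x), the smallest solution in [0,1] of the equation x = g(x) + (1−x)g'(x) equals (1 − √(1−4s))/(2(1−s)) when 0 < s ≤ 1/4, and equals 1 when 1/4 < s ≤ 1. -/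
/-- For the geometric offspring distribution on ℕ with parameter `s`, with
`g x = s*x/(1-(1-s)*x)` and `g' x = s/(1-(1-s)*x)^2`, the smallest solution in `[0,1]`
of `x = g x + (1-x)*g' x` equals `(1-√(1-4s))/(2(1-s))` for `0 < s ≤ 1/4` and `1` for
`1/4 < s ≤ 1`. -/
theorem stmt_3 (s : ℝ) (hs : 0 < s) :
    (s ≤ 1/4 →
      IsLeast {x : ℝ | x ∈ Set.Icc (0 : ℝ) 1 ∧
          x = s * x / (1 - (1 - s) * x) + (1 - x) * (s / (1 - (1 - s) * x) ^ 2)}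
        ((1 - Real.sqrt (1 - 4 * s)) / (2 * (1 - s)))) ∧
    (1/4 < s → s ≤ 1 →
      IsLeast {x : ℝ | x ∈ Set.Icc (0 : ℝ) 1 ∧
          x = s * x / (1 - (1 - s) * x) + (1 - x) * (s / (1 - (1 - s) * x) ^ 2)}
        1) := by
  have hkey : ∀ x : ℝ, s ≤ 1 → 0 ≤ x → x ≤ 1 →
      x = s * x / (1 - (1 - s) * x) + (1 - x) * (s / (1 - (1 - s) * x) ^ 2) →
      (x - 1) * ((1 - s)^2 * x^2 - (1 - s) * x + s) = 0 := by
    intro x hs1 hx0 hx1 heq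
    have hD : 0 < 1 - (1 - s) * x := by nlinarith
    have hD' : 1 - (1 - s) * x ≠ 0 := ne_of_gt hD
    field_simp at heq
    have hD'' : (1 - x * (1 - s)) ^ 2 ≠ 0 := by rw [mul_comm]; exact pow_ne_zero 2 hD'
    rw [eq_div_iff hD''] at heq
    nlinarith [heq, sq_nonneg x]
  constructor
  · intro hs4
    set u := Real.sqrt (1 - 4 * s) with hu_def
    have hu0 : 0 ≤ u := Real.sqrt_nonneg _
    have hu2 : u ^ 2 = 1 - 4 * s := Real.sq_sqrt (by linarith)
    have hu1 : u < 1 := by nlinarith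
    have hq : (0:ℝ) < 1 - s := by linarith
    set r := (1 - u) / (2 * (1 - s)) with hr_def
    have hr0 : 0 ≤ r := div_nonneg (by linarith) (by positivity)
    have hr1 : r < 1 := by
      rw [hr_def, div_lt_one (by positivity)]
      nlinarith
    have hDr : 1 - (1 - s) * r = (1 + u) / 2 := by
      rw [hr_def]; field_simp; ring
    constructor
    · refine ⟨⟨hr0, hr1.le⟩, ?_⟩
      have h2 : (1:ℝ) + u ≠ 0 := by positivity
      rw [hDr, hr_def]
      field_simp
      linear_combination (-1 + 2*s - u) * hu2
    · rintro x ⟨⟨hx0, hx1⟩, heq⟩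
      by_contra h
      push_neg at h
      have hx1' : x < 1 := lt_of_lt_of_le h (le_of_lt hr1)
      have key := hkey x (by linarith) hx0 hx1 heq
      have hquad : (1 - s)^2 * x^2 - (1 - s) * x + s = 0 := by
        rcases mul_eq_zero.1 key with h1 | h2
        · linarith
        · exact h2
      rw [hr_def, lt_div_iff₀ (by positivity)] at h
      have h1 : 0 < (1 - u) - 2 * (1 - s) * x := by nlinarith
      have h2 : 0 < (1 + u) - 2 * (1 - s) * x := by nlinarith
      nlinarith [mul_pos h1 h2, hu2, hquad]
  · intro hs4 hs1
    constructor
    · refine ⟨⟨zero_le_one, le_refl 1⟩, ?_⟩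
      have h : 1 - (1 - s) * 1 = s := by ring
      rw [h]
      field_simp
      ring
    · rintro x ⟨⟨hx0, hx1⟩, heq⟩
      by_contra h
      push_neg at h
      have key := hkey x hs1 hx0 hx1 heq
      have hquad : (1 - s)^2 * x^2 - (1 - s) * x + s = 0 := by
        rcases mul_eq_zero.1 key with h1 | h2
        · linarith
        · exact h2
      nlinarith [sq_nonneg (2 * (1 - s) * x - 1)]
end

section
/- For the geometric offspring distribution on ℕ₀ with parameter s (p_k = s(1−s)^k for k ≥ 0) and g(x) = s/(1−(1−s)x), the smallest solution in [0,1] of x = g(x) + (1−x)g'(x) equals (1 + s − √((1−s)(1−5s)))/(2(1−s)) when 0 < s ≤ 1/5, and equals 1 when 1/5 < s ≤ 1. -/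
lemma aux_cubic (s x : ℝ)
    (hx : x = s / (1 - (1 - s) * x) + (1 - x) * (s * (1 - s) / (1 - (1 - s) * x) ^ 2)) :
    (x - 1) * ((1 - s) ^ 2 * x ^ 2 - (1 - s) * (1 + s) * x + s * (2 - s)) = 0 := by
  by_cases hu : 1 - (1 - s) * x = 0
  · rw [hu] at hx
    simp at hx
    rw [hx] at hu
    simp at hu
  · field_simp at hx
    have hx2 : (1 - (1 - s) * x) * (x * (1 - (1 - s) * x) ^ 2) =
        (1 - (1 - s) * x) * (s * (1 - (1 - s) * x) + (1 - x) * (s * (1 - s))) := by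
      rw [eq_div_iff (pow_ne_zero 2 (by intro h; apply hu; linear_combination h))] at hx
      linear_combination (1 - (1 - s) * x) * hx
    have h := mul_left_cancel₀ hu hx2
    linear_combination h

/-- For the geometric offspring distribution on ℕ₀ with parameter `s`, with
`g x = s/(1-(1-s)*x)` and `g' x = s*(1-s)/(1-(1-s)*x)^2`, the smallest solution in `[0,1]`
of `x = g x + (1-x)*g' x` equals `(1+s-√((1-s)(1-5s)))/(2(1-s))` for `0 < s ≤ 1/5` and `1`
for `1/5 < s ≤ 1`. -/
theorem stmt_4 (s : ℝ) (hs : 0 < s) :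
    (s ≤ 1/5 →
      IsLeast {x : ℝ | x ∈ Set.Icc (0 : ℝ) 1 ∧
          x = s / (1 - (1 - s) * x) + (1 - x) * (s * (1 - s) / (1 - (1 - s) * x) ^ 2)}
        ((1 + s - Real.sqrt ((1 - s) * (1 - 5 * s))) / (2 * (1 - s)))) ∧
    (1/5 < s → s ≤ 1 →
      IsLeast {x : ℝ | x ∈ Set.Icc (0 : ℝ) 1 ∧
          x = s / (1 - (1 - s) * x) + (1 - x) * (s * (1 - s) / (1 - (1 - s) * x) ^ 2)}
        1) := by
  constructor
  · intro hs5
    have hq : 0 < 1 - s := by linarith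
    have hD : 0 ≤ (1 - s) * (1 - 5 * s) := by nlinarith
    set d := Real.sqrt ((1 - s) * (1 - 5 * s)) with hdd
    have hd0 : 0 ≤ d := Real.sqrt_nonneg _
    have hd2 : d ^ 2 = (1 - s) * (1 - 5 * s) := Real.sq_sqrt hD
    have hd1 : d ≤ 1 := by
      rw [show (1:ℝ) = Real.sqrt 1 by simp]
      exact Real.sqrt_le_sqrt (by nlinarith)
    set r := (1 + s - d) / (2 * (1 - s)) with hrr
    have h4 : 2 * (1 - s) * r = 1 + s - d := by
      rw [hrr]; field_simp
    have hdval : d = 1 + s - 2 * (1 - s) * r := by linarith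
    have hE : (1 + s - 2 * (1 - s) * r) ^ 2 = (1 - s) * (1 - 5 * s) := by
      rw [← hdval]; exact hd2
    have hQ : (1 - s) ^ 2 * r ^ 2 - (1 - s) * (1 + s) * r + s * (2 - s) = 0 := by
      linear_combination ((1:ℝ)/4) * hE
    have hr0 : 0 ≤ r := by
      apply div_nonneg (by linarith) (by linarith)
    have hr1 : r ≤ 1 := by
      rw [hrr, div_le_one (by linarith)]
      linarith
    have hu : 1 - (1 - s) * r = (1 - s + d) / 2 := by
      have : (1 - s) * r = (1 + s - d) / 2 := by linarith
      rw [this]; ring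
    have hupos : 0 < 1 - (1 - s) * r := by rw [hu]; positivity
    constructor
    · refine ⟨⟨hr0, hr1⟩, ?_⟩
      rw [eq_comm]
      clear_value r
      field_simp
      linear_combination (-(r - 1)) * hQ
    · rintro x ⟨⟨hx0, hx1⟩, hxeq⟩
      have hc := aux_cubic s x hxeq
      rcases mul_eq_zero.mp hc with h | h
      · have : x = 1 := by linarith
        rw [this]; exact hr1
      · have hsq : (2 * (1 - s) * x - (1 + s)) ^ 2 = d ^ 2 := by
          linear_combination 4 * h - hd2
        have habs : |2 * (1 - s) * x - (1 + s)| = d := by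
          rw [← Real.sqrt_sq_eq_abs, hsq, Real.sqrt_sq hd0]
        have hge : -d ≤ 2 * (1 - s) * x - (1 + s) := (abs_le.mp habs.le).1
        rw [hrr, div_le_iff₀ (by linarith)]
        linarith
  · intro hs5 hs1
    constructor
    · refine ⟨⟨by norm_num, le_refl 1⟩, ?_⟩
      have h1 : 1 - (1 - s) * 1 = s := by ring
      rw [h1, div_self hs.ne']
      ring
    · rintro x ⟨⟨hx0, hx1⟩, hxeq⟩
      have hc := aux_cubic s x hxeq
      have hQpos : 0 < (1 - s) ^ 2 * x ^ 2 - (1 - s) * (1 + s) * x + s * (2 - s) := by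
        rcases eq_or_lt_of_le hs1 with h | h
        · rw [h]; norm_num
        · nlinarith [sq_nonneg (2 * (1 - s) * x - (1 + s)),
            mul_pos (by linarith : (0:ℝ) < 1 - s) (by linarith : (0:ℝ) < 5 * s - 1)]
      rcases mul_eq_zero.mp hc with h | h
      · linarith
      · exact absurd h hQpos.ne'
end

section
/- Let (p_k)_{k∈ℕ₀} be a pmf with mean μ, and for q ∈ [0,1) define a distribution on ℕ by P(ξ' = k) = (1/(1−q)) Σ_{n≥k} p_n C(n,k) (1−q)^k q^{n−k} for k ≥ 1, where q satisfies g(q) = q (g the pgf of (p_k)). Then E[ξ'] = μ. -/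
open Finset in
lemma binom_mean (x y : ℝ) (h : x + y = 1) :
    ∀ n : ℕ, ∑ k ∈ range (n + 1), (k : ℝ) * (n.choose k : ℝ) * x ^ k * y ^ (n - k)
      = (n : ℝ) * x := by
  intro n
  induction n with
  | zero => simp
  | succ m _ =>
    rw [Finset.sum_range_succ']
    have key : ∀ j ∈ range (m + 1),
        ((j + 1 : ℕ) : ℝ) * ((m + 1).choose (j + 1) : ℝ) * x ^ (j + 1) * y ^ (m + 1 - (j + 1))
        = ((m + 1 : ℕ) : ℝ) * x * ((m.choose j : ℝ) * x ^ j * y ^ (m - j)) := by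
      intro j _
      have : ((j + 1) * (m + 1).choose (j + 1) : ℕ) = ((m + 1) * m.choose j : ℕ) := by
        rw [mul_comm (j+1), Nat.add_one_mul_choose_eq m j, mul_comm]
      have h2 : ((j + 1 : ℕ) : ℝ) * ((m + 1).choose (j + 1) : ℝ)
          = ((m + 1 : ℕ) : ℝ) * (m.choose j : ℝ) := by
        exact_mod_cast congrArg (Nat.cast : ℕ → ℝ) this
      rw [show m + 1 - (j + 1) = m - j by omega, h2, pow_succ]
      ring
    rw [Finset.sum_congr rfl key, ← Finset.mul_sum]
    have hb : ∑ j ∈ range (m + 1), (m.choose j : ℝ) * x ^ j * y ^ (m - j) = 1 :=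
      calc ∑ j ∈ range (m + 1), (m.choose j : ℝ) * x ^ j * y ^ (m - j)
          = ∑ j ∈ range (m + 1), x ^ j * y ^ (m - j) * (m.choose j : ℝ) :=
            Finset.sum_congr rfl fun k _ => by ring
        _ = (x + y) ^ m := (add_pow x y m).symm
        _ = 1 := by rw [h, one_pow]
    simp [hb]

/-- The skewed offspring distribution `ξ'` given by
`P(ξ' = k) = (1/(1-q)) ∑_{n ≥ k} p_n C(n,k) (1-q)^k q^(n-k)` for `k ≥ 1`,
where `q` is a fixed point of the pgf `g`, has the same mean `μ` as `(p_k)`.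
(Note `n.choose k = 0` for `k > n`, so the inner sum may run over all `n`.) -/
theorem stmt_11 (p : ℕ → ℝ) (hnn : ∀ k, 0 ≤ p k) (hpmf : ∑' k, p k = 1)
    (μ : ℝ) (hmean_summable : Summable (fun k : ℕ => (k : ℝ) * p k))
    (hmean : ∑' k : ℕ, (k : ℝ) * p k = μ)
    (q : ℝ) (hq : q ∈ Set.Ico (0 : ℝ) 1)
    (hfix : (∑' k, p k * q ^ k) = q) :
    ∑' k : ℕ, (k : ℝ) *
        ((1 / (1 - q)) * ∑' n : ℕ, p n * (n.choose k : ℝ) * (1 - q) ^ k * q ^ (n - k))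
      = μ := by
  obtain ⟨hq0, hq1⟩ := hq
  have hr : 0 < 1 - q := by linarith
  set F : ℕ → ℕ → ℝ :=
    fun n k => (k : ℝ) * ((1 / (1 - q)) * (p n * (n.choose k : ℝ) * (1 - q) ^ k * q ^ (n - k)))
    with hF
  -- each fiber over n has finite support in k
  have hzero : ∀ n k, k ∉ Finset.range (n + 1) → F n k = 0 := by
    intro n k hk
    have : n < k := by simpa using hk
    simp [hF, Nat.choose_eq_zero_of_lt this]
  have hsumk : ∀ n, Summable (fun k => F n k) := fun n =>
    summable_of_ne_finset_zero (s := Finset.range (n + 1)) (hzero n)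
  -- inner sum over k equals n * p n
  have hinner : ∀ n, ∑' k, F n k = (n : ℝ) * p n := by
    intro n
    rw [tsum_eq_sum (hzero n)]
    have : ∑ k ∈ Finset.range (n + 1), F n k
        = (1 / (1 - q)) * p n *
          ∑ k ∈ Finset.range (n + 1), (k : ℝ) * (n.choose k : ℝ) * (1 - q) ^ k * q ^ (n - k) := by
      rw [Finset.mul_sum]; exact Finset.sum_congr rfl fun k _ => by ring
    rw [this, binom_mean (1 - q) q (by ring) n]
    field_simp
  -- nonnegativity
  have hFnn : ∀ n k, 0 ≤ F n k := by
    intro n k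
    have := hnn n
    positivity
  -- summability of the double family
  have hsum2 : Summable (fun n => ∑' k, F n k) := by
    simp only [hinner]; exact hmean_summable
  have huncurry : Summable (Function.uncurry F) :=
    (summable_prod_of_nonneg (fun x => hFnn x.1 x.2)).mpr ⟨hsumk, hsum2⟩
  -- rewrite LHS
  have hLHS : (∑' k : ℕ, (k : ℝ) *
        ((1 / (1 - q)) * ∑' n : ℕ, p n * (n.choose k : ℝ) * (1 - q) ^ k * q ^ (n - k)))
      = ∑' k, ∑' n, F n k := by
    refine tsum_congr fun k => ?_
    rw [← tsum_mul_left, ← tsum_mul_left]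
  rw [hLHS, Summable.tsum_comm huncurry]
  simp only [hinner]
  exact hmean
end

section
/- For no odd n ≥ 1 and r ∈ (0,1) does there exist a pair of i.i.d. integer-valued random variables X_1, X_2 with X_1 + X_2 distributed as Bin(n, r). In other words, the binomial distribution with an odd number of trials is not separable. -/
/-- The pmf of the binomial distribution `Bin(n, r)`, viewed on the integers. -/
noncomputable def binPmf (n : ℕ) (r : ℝ) : ℤ → ℝ := fun m =>
  if 0 ≤ m ∧ m ≤ (n : ℤ) then
    (n.choose m.toNat : ℝ) * r ^ m.toNat * (1 - r) ^ (n - m.toNat)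
  else 0

/-- For odd `n` and `r ∈ (0,1)`, the binomial distribution `Bin(n, r)` is not
separable: there is no pmf `f` on ℤ whose convolution with itself is `Bin(n, r)`,
i.e. no i.i.d. integer-valued `X₁, X₂` with `X₁ + X₂ ~ Bin(n, r)`. -/
theorem stmt_16 (n : ℕ) (hn : Odd n) (r : ℝ) (hr0 : 0 < r) (hr1 : r < 1) :
    ¬ ∃ f : ℤ → ℝ, (∀ j, 0 ≤ f j) ∧ (∑' j : ℤ, f j) = 1 ∧
      ∀ m : ℤ, (∑' j : ℤ, f j * f (m - j)) = binPmf n r m := by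
  classical
  rintro ⟨f, hf0, hfsum, hconv⟩
  have hfS : Summable f := by
    by_contra h
    rw [tsum_eq_zero_of_not_summable h] at hfsum
    norm_num at hfsum
  have hfle : ∀ j, f j ≤ 1 := by
    intro j
    calc f j ≤ ∑' i, f i := Summable.le_tsum hfS j (fun i _ => hf0 i)
    _ = 1 := hfsum
  have hgS : ∀ m : ℤ, Summable (fun j => f j * f (m - j)) := fun m =>
    Summable.of_nonneg_of_le (fun j => mul_nonneg (hf0 j) (hf0 _))
      (fun j => by
        calc f j * f (m - j) ≤ f j * 1 :=
          mul_le_mul_of_nonneg_left (hfle _) (hf0 j)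
        _ = f j := mul_one _) hfS
  have hbin_pos : ∀ m : ℤ, 0 < binPmf n r m → 0 ≤ m ∧ m ≤ (n : ℤ) := by
    intro m hm
    by_contra h
    rw [binPmf] at hm
    simp only [if_neg h] at hm
    exact lt_irrefl 0 hm
  have hsupp : ∀ j : ℤ, 0 < f j → 0 ≤ j ∧ j ≤ (n : ℤ) := by
    intro j hj
    have h1 : 0 < ∑' i : ℤ, f i * f (2 * j - i) := by
      have hle := Summable.le_tsum (hgS (2 * j)) j
        (fun i _ => mul_nonneg (hf0 i) (hf0 _))
      have h2 : 2 * j - j = j := by ring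
      rw [h2] at hle
      exact lt_of_lt_of_le (mul_pos hj hj) hle
    rw [hconv] at h1
    obtain ⟨h2, h3⟩ := hbin_pos _ h1
    omega
  set S : Finset ℤ := (Finset.Icc 0 (n : ℤ)).filter (fun j => 0 < f j) with hS
  have hmemS : ∀ j : ℤ, 0 < f j → j ∈ S := by
    intro j hj
    obtain ⟨h1, h2⟩ := hsupp j hj
    simp [hS, Finset.mem_filter, Finset.mem_Icc, h1, h2, hj]
  have hSne : S.Nonempty := by
    by_contra h
    have hz : ∀ j, f j = 0 := by
      intro j
      by_contra hj
      exact h ⟨j, hmemS j (lt_of_le_of_ne (hf0 j) (Ne.symm hj))⟩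
    have : (∑' j : ℤ, f j) = 0 := by simp [hz]
    rw [this] at hfsum
    norm_num at hfsum
  set b : ℤ := S.max' hSne with hb
  have hbmem : b ∈ S := S.max'_mem hSne
  have hbpos : 0 < f b := by
    have := Finset.mem_filter.mp hbmem
    exact this.2
  have hble : ∀ j : ℤ, 0 < f j → j ≤ b := fun j hj => S.le_max' j (hmemS j hj)
  -- 2b ≤ n
  have h2b : 2 * b ≤ (n : ℤ) := by
    have h1 : 0 < ∑' i : ℤ, f i * f (2 * b - i) := by
      have hle := Summable.le_tsum (hgS (2 * b)) b
        (fun i _ => mul_nonneg (hf0 i) (hf0 _))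
      have h2 : 2 * b - b = b := by ring
      rw [h2] at hle
      exact lt_of_lt_of_le (mul_pos hbpos hbpos) hle
    rw [hconv] at h1
    exact (hbin_pos _ h1).2
  -- n ≤ 2b
  have hn2b : (n : ℤ) ≤ 2 * b := by
    by_contra h
    push_neg at h
    have hz : ∀ j : ℤ, f j * f ((n : ℤ) - j) = 0 := by
      intro j
      rcases (hf0 j).lt_or_eq with hj | hj
      · rcases (hf0 ((n : ℤ) - j)).lt_or_eq with hj' | hj'
        · have b1 := hble j hj
          have b2 := hble _ hj'
          omega
        · rw [← hj', mul_zero]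
      · rw [← hj, zero_mul]
    have hzero : (∑' j : ℤ, f j * f ((n : ℤ) - j)) = 0 := by simp [hz]
    rw [hconv] at hzero
    have hpos : 0 < binPmf n r (n : ℤ) := by
      rw [binPmf]
      have hc : (0 : ℤ) ≤ (n : ℤ) ∧ (n : ℤ) ≤ (n : ℤ) := ⟨Int.ofNat_nonneg n, le_refl _⟩
      rw [if_pos hc]
      simp only [Int.toNat_natCast, Nat.choose_self, Nat.cast_one, one_mul, Nat.sub_self,
        pow_zero, mul_one]
      positivity
    rw [hzero] at hpos
    exact lt_irrefl 0 hpos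
  obtain ⟨k, hk⟩ := hn
  omega
end
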